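/- For q ≥ 2 and nonnegative reals a, b and real c ≤ 0 with a² + b² > 0, one has (a² + b² - 2c)^{q/2} ≥ a^q + b^q - q c (a² + b²)^{q/2 - 1}. -/

import Mathlib

open Real

lemma superadd_rpow {x y p : ℝ} (hx : 0 ≤ x) (hy : 0 ≤ y) (hp : 1 ≤ p) :
    x ^ p + y ^ p ≤ (x + y) ^ p := by
  have h := NNReal.add_rpow_le_rpow_add x.toNNReal y.toNNReal hp
  rw [← NNReal.coe_le_coe] at h
  push_cast [NNReal.coe_rpow] at h
  rwa [Real.coe_toNNReal x hx, Real.coe_toNNReal y hy] at h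

theorem stmt7 (q a b c : ℝ) (hq : 2 ≤ q) (ha : 0 ≤ a) (hb : 0 ≤ b) (hc : c ≤ 0)
    (hab : 0 < a ^ 2 + b ^ 2) :
    (a ^ 2 + b ^ 2 - 2 * c) ^ (q / 2) ≥ a ^ q + b ^ q - q * c * (a ^ 2 + b ^ 2) ^ (q / 2 - 1) := by
  set s := a ^ 2 + b ^ 2 with hs
  set t := -2 * c with ht
  have hhalf : 1 ≤ q / 2 := by linarith
  have hspos : 0 < s := hab
  have htn : 0 ≤ t := by simp [ht]; linarith
  -- step 1: a^q + b^q ≤ s^(q/2)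
  have h1 : a ^ q + b ^ q ≤ s ^ (q / 2) := by
    have haq : (a ^ 2) ^ (q / 2) = a ^ q := by
      rw [← Real.rpow_natCast a 2, ← Real.rpow_mul ha]
      norm_num
      rw [show (2:ℝ) * (q/2) = q by ring]
    have hbq : (b ^ 2) ^ (q / 2) = b ^ q := by
      rw [← Real.rpow_natCast b 2, ← Real.rpow_mul hb]
      norm_num
      rw [show (2:ℝ) * (q/2) = q by ring]
    have := superadd_rpow (by positivity : (0:ℝ) ≤ a ^ 2) (by positivity : (0:ℝ) ≤ b ^ 2) hhalf
    rwa [haq, hbq] at this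
  -- step 2: Bernoulli
  have hber := one_add_mul_self_le_rpow_one_add
    (s := t / s) (by nlinarith [div_nonneg htn hspos.le]) hhalf
  have key : s ^ (q / 2) + (q / 2) * t * s ^ (q / 2 - 1) ≤ (s + t) ^ (q / 2) := by
    have h3 : (s + t) ^ (q / 2) = s ^ (q / 2) * (1 + t / s) ^ (q / 2) := by
      rw [← Real.mul_rpow hspos.le (by positivity)]
      rw [mul_add, mul_one, mul_div_cancel₀ _ hspos.ne']
    rw [h3]
    have h4 : s ^ (q / 2) * (1 + q / 2 * (t / s)) ≤ s ^ (q / 2) * (1 + t / s) ^ (q / 2) :=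
      mul_le_mul_of_nonneg_left hber (by positivity)
    refine le_trans (le_of_eq ?_) h4
    rw [Real.rpow_sub hspos, Real.rpow_one]
    field_simp
  have hst : s - 2 * c = s + t := by rw [ht]; ring
  rw [ge_iff_le, hst]
  calc a ^ q + b ^ q - q * c * s ^ (q / 2 - 1)
      ≤ s ^ (q / 2) + (q / 2) * t * s ^ (q / 2 - 1) := by
        rw [ht]; nlinarith [h1]
    _ ≤ (s + t) ^ (q / 2) := key
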